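/- Let C ⊆ ℝⁿ be a nonempty closed convex set, let F : ℝⁿ → ℝⁿ be monotone and continuous, and assume SOL(F,C) is nonempty. Let θ > 0 and let β : ℕ → ℝ satisfy β_k > 0 for all k, ∑_{k=0}^∞ β_k = ∞ and ∑_{k=0}^∞ β_k² < ∞. Let {ỹ^k} and {z^k} be sequences in ℝⁿ such that for every k: dist(ỹ^k, C) ≤ θβ_k, and for every x ∈ C: ‖ỹ^k − x‖ ≤ ‖z^k − x‖ and ‖z^{k+1} − x‖ ≤ ‖(ỹ^k − (β_k/η_k)F(ỹ^k)) − x‖, where η_k = max{1, ‖F(ỹ^k)‖}. Set σ_k := ∑_{j=0}^k β_j/η_j and define the ergodic sequence x^{k+1} := (1/σ_k) ∑_{j=0}^k (β_j/η_j) ỹ^j. Then there exists x̄ ∈ SOL(F,C) such that the sequence {P_{SOL(F,C)}(ỹ^k)} converges to x̄ and the sequence {x^k} converges to x̄. -/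

import Mathlib

open scoped RealInnerProductSpace
open Metric Filter

/-- The solution set of the variational inequality problem VIP(F, C). -/
def SOL {n : ℕ} (F : EuclideanSpace ℝ (Fin n) → EuclideanSpace ℝ (Fin n))
    (C : Set (EuclideanSpace ℝ (Fin n))) : Set (EuclideanSpace ℝ (Fin n)) :=
  {x | x ∈ C ∧ ∀ y ∈ C, 0 ≤ ⟪F x, y - x⟫}

section Aux
variable {E : Type*} [NormedAddCommGroup E] [InnerProductSpace ℝ E]

/-- Projection characterization from minimality over a convex set. -/
lemma proj_inner_le (K : Set E) (hK : Convex ℝ K) {u p : E} (hpK : p ∈ K)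
    (hmin : ∀ q ∈ K, ‖u - p‖ ≤ ‖u - q‖) {q : E} (hq : q ∈ K) :
    ⟪u - p, q - p⟫ ≤ 0 := by
  have key : ∀ t : ℝ, 0 < t → t ≤ 1 → 2 * ⟪u - p, q - p⟫ ≤ t * ‖q - p‖ ^ 2 := by
    intro t ht ht1
    have hmem : p + t • (q - p) ∈ K := by
      have := hK hpK hq (by linarith : (0:ℝ) ≤ 1 - t) ht.le (by ring)
      convert this using 1
      module
    have h1 := hmin _ hmem
    have h2 : u - (p + t • (q - p)) = (u - p) - t • (q - p) := by abel
    have h3 : ‖(u - p) - t • (q - p)‖ ^ 2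
        = ‖u - p‖ ^ 2 - 2 * (t * ⟪u - p, q - p⟫) + t ^ 2 * ‖q - p‖ ^ 2 := by
      rw [norm_sub_sq_real, real_inner_smul_right, norm_smul]
      rw [Real.norm_eq_abs, mul_pow, sq_abs]
    rw [h2] at h1
    have h4 : ‖u - p‖ ^ 2 ≤ ‖(u - p) - t • (q - p)‖ ^ 2 := by
      have := norm_nonneg (u - p)
      nlinarith [norm_nonneg ((u - p) - t • (q - p))]
    rw [h3] at h4
    have h5 : 2 * (t * ⟪u - p, q - p⟫) ≤ t ^ 2 * ‖q - p‖ ^ 2 := by linarith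
    have h6 : t * (2 * ⟪u - p, q - p⟫) ≤ t * (t * ‖q - p‖ ^ 2) := by nlinarith
    exact (mul_le_mul_iff_right₀ ht).mp h6
  have hlim : Tendsto (fun m : ℕ => (1 / (m + 1 : ℝ)) * ‖q - p‖ ^ 2) atTop (nhds 0) := by
    simpa using tendsto_one_div_add_atTop_nhds_zero_nat.mul_const (‖q - p‖ ^ 2)
  have h7 : 2 * ⟪u - p, q - p⟫ ≤ 0 := by
    refine le_of_tendsto_of_tendsto tendsto_const_nhds hlim (Eventually.of_forall fun m => ?_)
    exact key _ (by positivity) (by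
      rw [div_le_one (by positivity)]; linarith [Nat.cast_nonneg (α := ℝ) m])
  linarith

/-- Minty's lemma (the nontrivial direction). -/
lemma minty_mem_SOL {n : ℕ} (C : Set (EuclideanSpace ℝ (Fin n))) (hCcv : Convex ℝ C)
    (F : EuclideanSpace ℝ (Fin n) → EuclideanSpace ℝ (Fin n)) (hFcont : Continuous F)
    {a : EuclideanSpace ℝ (Fin n)} (ha : a ∈ C)
    (h : ∀ y ∈ C, 0 ≤ ⟪F y, y - a⟫) : a ∈ SOL F C := by
  refine ⟨ha, fun y hy => ?_⟩
  set yt : ℕ → EuclideanSpace ℝ (Fin n) := fun m => a + (1 / (m + 1 : ℝ)) • (y - a) with hyt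
  have hmem : ∀ m : ℕ, yt m ∈ C := by
    intro m
    have ht : (0:ℝ) < 1 / (m + 1 : ℝ) := by positivity
    have ht1 : (1 : ℝ) / (m + 1 : ℝ) ≤ 1 := by
      rw [div_le_one (by positivity)]; linarith [Nat.cast_nonneg (α := ℝ) m]
    have := hCcv ha hy (by linarith : (0:ℝ) ≤ 1 - 1 / (m + 1 : ℝ)) ht.le (by ring)
    convert this using 1
    module
  have hpos : ∀ m : ℕ, 0 ≤ ⟪F (yt m), y - a⟫ := by
    intro m
    have h1 := h _ (hmem m)
    rw [show yt m - a = (1 / (m + 1 : ℝ)) • (y - a) from by rw [hyt]; module, real_inner_smul_right] at h1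
    have ht : (0:ℝ) < 1 / (m + 1 : ℝ) := by positivity
    nlinarith
  have htend : Tendsto (fun m : ℕ => ⟪F (yt m), y - a⟫) atTop (nhds ⟪F a, y - a⟫) := by
    have h0 : Tendsto yt atTop (nhds a) := by
      have : Tendsto (fun m : ℕ => (1 / (m + 1 : ℝ)) • (y - a)) atTop
          (nhds ((0:ℝ) • (y - a))) :=
        tendsto_one_div_add_atTop_nhds_zero_nat.smul_const (y - a)
      rw [hyt]
      simpa using (tendsto_const_nhds (x := a)).add this
    exact Tendsto.inner ((hFcont.tendsto a).comp h0) tendsto_const_nhds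
  exact ge_of_tendsto' htend hpos
end Aux

section SOLprops
variable {n : ℕ} (C : Set (EuclideanSpace ℝ (Fin n)))
  (F : EuclideanSpace ℝ (Fin n) → EuclideanSpace ℝ (Fin n))

lemma SOL_eq_minty (hCcv : Convex ℝ C)
    (hFmono : ∀ x y, 0 ≤ ⟪F x - F y, x - y⟫) (hFcont : Continuous F) :
    SOL F C = {x | x ∈ C ∧ ∀ y ∈ C, 0 ≤ ⟪F y, y - x⟫} := by
  ext a
  constructor
  · rintro ⟨haC, hsol⟩
    refine ⟨haC, fun y hy => ?_⟩
    have h1 := hsol y hy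
    have h2 := hFmono y a
    rw [inner_sub_left] at h2
    linarith
  · rintro ⟨haC, h⟩
    exact minty_mem_SOL C hCcv F hFcont haC h

lemma SOL_convex (hCcv : Convex ℝ C)
    (hFmono : ∀ x y, 0 ≤ ⟪F x - F y, x - y⟫) (hFcont : Continuous F) :
    Convex ℝ (SOL F C) := by
  rw [SOL_eq_minty C F hCcv hFmono hFcont]
  intro x1 hx1 x2 hx2 a b ha hb hab
  refine ⟨hCcv hx1.1 hx2.1 ha hb hab, fun y hy => ?_⟩
  have e : y - (a • x1 + b • x2) = a • (y - x1) + b • (y - x2) := by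
    match_scalars <;> linarith
  rw [e, inner_add_right, real_inner_smul_right, real_inner_smul_right]
  have := hx1.2 y hy; have := hx2.2 y hy
  positivity
lemma SOL_closed (hCcl : IsClosed C) (hCcv : Convex ℝ C)
    (hFmono : ∀ x y, 0 ≤ ⟪F x - F y, x - y⟫) (hFcont : Continuous F) :
    IsClosed (SOL F C) := by
  rw [SOL_eq_minty C F hCcv hFmono hFcont]
  have : {x | x ∈ C ∧ ∀ y ∈ C, 0 ≤ ⟪F y, y - x⟫}
      = C ∩ ⋂ y ∈ C, {x | 0 ≤ ⟪F y, y - x⟫} := by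
    ext x; simp [Set.mem_iInter]
  rw [this]
  refine hCcl.inter (isClosed_biInter fun y hy => ?_)
  have hcont : Continuous fun x : EuclideanSpace ℝ (Fin n) => ⟪F y, y - x⟫ :=
    continuous_const.inner (continuous_const.sub continuous_id)
  exact isClosed_le continuous_const hcont
end SOLprops


set_option maxHeartbeats 4000000 in
theorem stmt_14 {n : ℕ} (hn : 0 < n)
    (C : Set (EuclideanSpace ℝ (Fin n)))
    (hCne : C.Nonempty) (hCcl : IsClosed C) (hCcv : Convex ℝ C)
    (F : EuclideanSpace ℝ (Fin n) → EuclideanSpace ℝ (Fin n))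
    (hFmono : ∀ x y, 0 ≤ ⟪F x - F y, x - y⟫) (hFcont : Continuous F)
    (hSOLne : (SOL F C).Nonempty)
    (θ : ℝ) (hθ : 0 < θ)
    (β : ℕ → ℝ) (hβpos : ∀ k, 0 < β k)
    (hβdiv : Tendsto (fun N => ∑ k ∈ Finset.range N, β k) atTop atTop)
    (hβsq : Summable fun k => (β k) ^ 2)
    (ytil z : ℕ → EuclideanSpace ℝ (Fin n))
    (hfeas : ∀ k, infDist (ytil k) C ≤ θ * β k)
    (hyz : ∀ k, ∀ x ∈ C, ‖ytil k - x‖ ≤ ‖z k - x‖)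
    (hznext : ∀ k, ∀ x ∈ C,
      ‖z (k + 1) - x‖ ≤ ‖ytil k - (β k / max 1 ‖F (ytil k)‖) • F (ytil k) - x‖)
    (σ : ℕ → ℝ)
    (hσ : ∀ k, σ k = ∑ j ∈ Finset.range (k + 1), β j / max 1 ‖F (ytil j)‖)
    (x : ℕ → EuclideanSpace ℝ (Fin n))
    (hx : ∀ k, x (k + 1) =
      (σ k)⁻¹ • ∑ j ∈ Finset.range (k + 1), (β j / max 1 ‖F (ytil j)‖) • ytil j)
    -- `p k = P_{SOL(F,C)} (ytil k)`: `p k` is the point of `SOL F C` nearest to `ytil k`.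
    (p : ℕ → EuclideanSpace ℝ (Fin n))
    (hp : ∀ k, p k ∈ SOL F C ∧ ∀ q ∈ SOL F C, ‖ytil k - p k‖ ≤ ‖ytil k - q‖) :
    ∃ xbar ∈ SOL F C,
      Tendsto p atTop (nhds xbar) ∧ Tendsto x atTop (nhds xbar) := by
  obtain ⟨q0, hq0⟩ := hSOLne
  have hSOLcv : Convex ℝ (SOL F C) := SOL_convex C F hCcv hFmono hFcont
  have hSOLcl : IsClosed (SOL F C) := SOL_closed C F hCcl hCcv hFmono hFcont
  set η : ℕ → ℝ := fun k => max 1 ‖F (ytil k)‖ with hηdef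
  set w : ℕ → ℝ := fun k => β k / η k with hwdef
  have hη1 : ∀ k, 1 ≤ η k := fun k => le_max_left _ _
  have hηF : ∀ k, ‖F (ytil k)‖ ≤ η k := fun k => le_max_right _ _
  have hηpos : ∀ k, 0 < η k := fun k => lt_of_lt_of_le one_pos (hη1 k)
  have hwpos : ∀ k, 0 < w k := fun k => div_pos (hβpos k) (hηpos k)
  have hwβ : ∀ k, w k ≤ β k := fun k => div_le_self (hβpos k).le (hη1 k)
  -- Step A : one-step inequality
  have hstep : ∀ k, ∀ q ∈ C, ‖ytil (k+1) - q‖^2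
      ≤ ‖ytil k - q‖^2 - 2 * (w k * ⟪F (ytil k), ytil k - q⟫) + β k ^ 2 := by
    intro k q hq
    have h1 : ‖ytil (k+1) - q‖ ≤ ‖ytil k - w k • F (ytil k) - q‖ :=
      (hyz (k+1) q hq).trans (hznext k q hq)
    have h2 : ytil k - w k • F (ytil k) - q = (ytil k - q) - w k • F (ytil k) := by abel
    have h3 : ‖(ytil k - q) - w k • F (ytil k)‖ ^ 2
        = ‖ytil k - q‖^2 - 2 * (w k * ⟪F (ytil k), ytil k - q⟫) + w k^2 * ‖F (ytil k)‖^2 := by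
      rw [norm_sub_sq_real, real_inner_smul_right, norm_smul, Real.norm_eq_abs, mul_pow, sq_abs,
        real_inner_comm]
    have h4 : ‖ytil (k+1) - q‖^2 ≤ ‖(ytil k - q) - w k • F (ytil k)‖^2 := by
      rw [← h2]
      nlinarith [norm_nonneg (ytil (k+1) - q), norm_nonneg (ytil k - w k • F (ytil k) - q)]
    have h5 : w k ^2 * ‖F (ytil k)‖^2 ≤ β k ^2 := by
      have e1 := hηF k
      have e2 := hηpos k
      have e3 := hβpos k
      have e4 : w k * ‖F (ytil k)‖ ≤ β k := by
        rw [hwdef]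
        rw [div_mul_eq_mul_div, div_le_iff₀ e2]
        nlinarith [norm_nonneg (F (ytil k))]
      have e5 : 0 ≤ w k * ‖F (ytil k)‖ := mul_nonneg (hwpos k).le (norm_nonneg _)
      nlinarith [mul_le_mul e4 e4 e5 e3.le]
    rw [h3] at h4
    linarith
  -- Step B : lower bound on the inner product at solutions
  have hsol_lb : ∀ k, ∀ q ∈ SOL F C, -(θ * β k * ‖F q‖) ≤ ⟪F (ytil k), ytil k - q⟫ := by
    intro k q hq
    obtain ⟨c, hcC, hce⟩ := hCcl.exists_infDist_eq_dist hCne (ytil k)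
    have hcd : ‖ytil k - c‖ ≤ θ * β k := by
      rw [← dist_eq_norm, ← hce]; exact hfeas k
    have h1 : 0 ≤ ⟪F q, c - q⟫ := hq.2 c hcC
    have h2 : ⟪F q, ytil k - q⟫ = ⟪F q, ytil k - c⟫ + ⟪F q, c - q⟫ := by
      rw [← inner_add_right]; congr 1; abel
    have h3 : -(θ * β k * ‖F q‖) ≤ ⟪F q, ytil k - c⟫ := by
      have hab := abs_real_inner_le_norm (F q) (ytil k - c)
      have h4 : ‖F q‖ * ‖ytil k - c‖ ≤ ‖F q‖ * (θ * β k) :=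
        mul_le_mul_of_nonneg_left hcd (norm_nonneg _)
      have h5 := (abs_le.mp hab).1
      nlinarith
    have h5 : ⟪F q, ytil k - q⟫ ≤ ⟪F (ytil k), ytil k - q⟫ := by
      have h6 := hFmono (ytil k) q
      rw [inner_sub_left] at h6; linarith
    linarith
  have hqf : ∀ q ∈ SOL F C, ∀ k,
      ‖ytil (k+1) - q‖^2 ≤ ‖ytil k - q‖^2 + (2*θ*‖F q‖ + 1) * β k ^ 2 := by
    intro q hq k
    have h1 := hstep k q hq.1
    have h2 := hsol_lb k q hq
    have h3 := hwβ k
    have h4 := (hwpos k).le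
    have h5 := (hβpos k).le
    have h6 : -(2 * (w k * ⟪F (ytil k), ytil k - q⟫)) ≤ 2*θ*‖F q‖ * β k ^ 2 := by
      have hnn : (0:ℝ) ≤ θ * β k * ‖F q‖ := by positivity
      nlinarith [mul_nonneg h4 (by linarith : (0:ℝ) ≤ ⟪F (ytil k), ytil k - q⟫ + θ * β k * ‖F q‖),
        mul_nonneg (by linarith : (0:ℝ) ≤ β k - w k) hnn]
    nlinarith
  set Sp : ℕ → ℝ := fun k => ∑ j ∈ Finset.range k, β j ^ 2 with hSpdef
  set S : ℝ := ∑' j, β j ^ 2 with hSdef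
  have hSpS : ∀ k, Sp k ≤ S := fun k => Summable.sum_le_tsum _ (fun j _ => sq_nonneg _) hβsq
  have hSnn : 0 ≤ S := tsum_nonneg fun j => sq_nonneg _
  have hSpmono : Monotone Sp :=
    monotone_nat_of_le_succ fun k => by
      rw [hSpdef]; simp [Finset.sum_range_succ]; positivity
  have hSpnn : ∀ k, 0 ≤ Sp k := fun k => Finset.sum_nonneg fun j _ => sq_nonneg _
  have htel : ∀ q ∈ SOL F C, ∀ k m, k ≤ m →
      ‖ytil m - q‖^2 ≤ ‖ytil k - q‖^2 + (2*θ*‖F q‖+1) * (Sp m - Sp k) := by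
    intro q hq k m hkm
    induction m, hkm using Nat.le_induction with
    | base => simp
    | succ m hkm ih =>
      have h1 := hqf q hq m
      have h2 : Sp (m+1) = Sp m + β m ^ 2 := by simp [hSpdef, Finset.sum_range_succ]
      have h3 : (2*θ*‖F q‖+1) * (Sp (m+1) - Sp k)
          = (2*θ*‖F q‖+1) * (Sp m - Sp k) + (2*θ*‖F q‖+1) * β m ^ 2 := by rw [h2]; ring
      linarith
  have hc0 : ∀ q : EuclideanSpace ℝ (Fin n), (0:ℝ) ≤ 2*θ*‖F q‖+1 := fun q => by positivity
  set Ry : ℝ := Real.sqrt (‖ytil 0 - q0‖^2 + (2*θ*‖F q0‖+1) * S) with hRydef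
  have hRynn : 0 ≤ Ry := Real.sqrt_nonneg _
  have hyb : ∀ k, ‖ytil k - q0‖ ≤ Ry := by
    intro k
    have h1 := htel q0 hq0 0 k (Nat.zero_le k)
    have h2 : ‖ytil k - q0‖^2 ≤ ‖ytil 0 - q0‖^2 + (2*θ*‖F q0‖+1) * S := by
      have := hSpS k
      have h3 : Sp 0 = 0 := by simp [hSpdef]
      nlinarith [hc0 q0]
    calc ‖ytil k - q0‖ = Real.sqrt (‖ytil k - q0‖^2) := by
          rw [Real.sqrt_sq (norm_nonneg _)]
      _ ≤ Ry := Real.sqrt_le_sqrt h2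
  have hdb : ∀ k, ‖ytil k - p k‖ ≤ Ry := fun k => le_trans ((hp k).2 q0 hq0) (hyb k)
  have hyn : ∀ k, ‖ytil k‖ ≤ ‖q0‖ + Ry := by
    intro k
    calc ‖ytil k‖ = ‖ytil k - q0 + q0‖ := by rw [sub_add_cancel]
      _ ≤ ‖ytil k - q0‖ + ‖q0‖ := norm_add_le _ _
      _ ≤ ‖q0‖ + Ry := by linarith [hyb k]
  have hpn : ∀ k, ‖p k‖ ≤ ‖q0‖ + 2*Ry := by
    intro k
    calc ‖p k‖ = ‖(ytil k - q0) - (ytil k - p k) + q0‖ := by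
          congr 1; abel
      _ ≤ ‖(ytil k - q0) - (ytil k - p k)‖ + ‖q0‖ := norm_add_le _ _
      _ ≤ ‖ytil k - q0‖ + ‖ytil k - p k‖ + ‖q0‖ := by
          linarith [norm_sub_le (ytil k - q0) (ytil k - p k)]
      _ ≤ ‖q0‖ + 2*Ry := by linarith [hyb k, hdb k]
  -- bound on F over the relevant ball
  obtain ⟨Mf, hMf⟩ := (isCompact_closedBall (0 : EuclideanSpace ℝ (Fin n))
    (‖q0‖ + 2*Ry)).exists_bound_of_continuousOn hFcont.continuousOn
  have hMfy : ∀ k, ‖F (ytil k)‖ ≤ Mf := fun k =>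
    hMf _ (by simpa [mem_closedBall_zero_iff] using le_trans (hyn k) (by linarith))
  have hMfp : ∀ k, ‖F (p k)‖ ≤ Mf := fun k =>
    hMf _ (by simpa [mem_closedBall_zero_iff] using hpn k)
  have hMfnn : 0 ≤ Mf := le_trans (norm_nonneg _) (hMfy 0)
  set M : ℝ := max 1 Mf with hMdef
  have hM1 : (1:ℝ) ≤ M := le_max_left _ _
  have hηM : ∀ k, η k ≤ M := fun k => max_le_max le_rfl (hMfy k)
  have hwlb : ∀ k, β k / M ≤ w k := fun k =>
    div_le_div_of_nonneg_left (hβpos k).le (hηpos k) (hηM k)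
  -- σ facts
  have hσw : ∀ k, σ k = ∑ j ∈ Finset.range (k+1), w j := hσ
  have hσpos : ∀ k, 0 < σ k := by
    intro k
    rw [hσw k]
    exact Finset.sum_pos (fun j _ => hwpos j) ⟨0, Finset.mem_range.mpr (Nat.succ_pos k)⟩
  have hσtop : Tendsto σ atTop atTop := by
    have h1 : Tendsto (fun k => M⁻¹ * ∑ j ∈ Finset.range (k+1), β j) atTop atTop := by
      apply Tendsto.const_mul_atTop (show (0:ℝ) < M⁻¹ by positivity)
      exact hβdiv.comp (tendsto_add_atTop_nat 1)
    apply tendsto_atTop_mono _ h1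
    intro k
    rw [hσw k, Finset.mul_sum]
    apply Finset.sum_le_sum
    intro j _
    rw [inv_mul_eq_div]
    exact hwlb j
  -- Cauchy sequence of projections
  set E0 : ℝ := 2*θ*Mf + 1 with hE0def
  have hE0 : ∀ k, 2*θ*‖F (p k)‖ + 1 ≤ E0 := fun k => by
    have := hMfp k; nlinarith
  have hE0nn : (0:ℝ) ≤ E0 := le_trans (hc0 (p 0)) (hE0 0)
  set g : ℕ → ℝ := fun k => ‖ytil k - p k‖^2 + E0 * (S - Sp k) with hgdef
  have hkey2 : ∀ k m, k ≤ m → ‖ytil m - p k‖^2 ≤ ‖ytil k - p k‖^2 + E0 * (Sp m - Sp k) := by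
    intro k m hkm
    have h1 := htel (p k) (hp k).1 k m hkm
    have h2 : Sp k ≤ Sp m := hSpmono hkm
    have h3 := hE0 k
    have h4 := hc0 (p k)
    nlinarith
  have hganti : Antitone g := by
    intro k m hkm
    have h1 := hkey2 k m hkm
    have h2 : ‖ytil m - p m‖ ≤ ‖ytil m - p k‖ := (hp m).2 (p k) (hp k).1
    have h3 : ‖ytil m - p m‖^2 ≤ ‖ytil m - p k‖^2 := by
      nlinarith [norm_nonneg (ytil m - p m), norm_nonneg (ytil m - p k)]
    have h4 : E0 * (Sp m - Sp k) + E0 * (S - Sp m) = E0 * (S - Sp k) := by ring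
    show ‖ytil m - p m‖^2 + E0 * (S - Sp m) ≤ ‖ytil k - p k‖^2 + E0 * (S - Sp k)
    linarith
  have hgnn : ∀ k, 0 ≤ g k := by
    intro k
    have := hSpS k
    have := sq_nonneg ‖ytil k - p k‖
    simp only [hgdef]
    nlinarith
  have hgbdd : BddBelow (Set.range g) := ⟨0, by rintro _ ⟨k, rfl⟩; exact hgnn k⟩
  have hgconv : Tendsto g atTop (nhds (⨅ k, g k)) := tendsto_atTop_ciInf hganti hgbdd
  have hgL : ∀ k, (⨅ i, g i) ≤ g k := fun k => ciInf_le hgbdd k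
  have hppk : ∀ k m, k ≤ m → ‖p m - p k‖^2 ≤ g k - g m := by
    intro k m hkm
    have h1 : ⟪ytil m - p m, p k - p m⟫ ≤ 0 :=
      proj_inner_le (SOL F C) hSOLcv (hp m).1 (hp m).2 (hp k).1
    have h2 : ‖ytil m - p k‖^2
        = ‖ytil m - p m‖^2 + 2*⟪ytil m - p m, p m - p k⟫ + ‖p m - p k‖^2 := by
      have e : ytil m - p k = (ytil m - p m) + (p m - p k) := by abel
      rw [e, norm_add_sq_real]
    have h3 : ⟪ytil m - p m, p m - p k⟫ = -⟪ytil m - p m, p k - p m⟫ := by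
      rw [← inner_neg_right]; congr 1; abel
    have h4 := hkey2 k m hkm
    have h5 : E0 * (Sp m - Sp k) = E0*(S - Sp k) - E0*(S - Sp m) := by ring
    show ‖p m - p k‖^2 ≤ (‖ytil k - p k‖^2 + E0 * (S - Sp k))
      - (‖ytil m - p m‖^2 + E0 * (S - Sp m))
    linarith
  have hpcauchy : CauchySeq p := by
    rw [Metric.cauchySeq_iff']
    intro ε hε
    have h1 : ∀ᶠ k in atTop, g k < (⨅ i, g i) + ε^2 := by
      have := hgconv.eventually_lt_const (show (⨅ i, g i) < (⨅ i, g i) + ε^2 by nlinarith)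
      exact this
    obtain ⟨N, hN⟩ := h1.exists_forall_of_atTop
    refine ⟨N, fun m hm => ?_⟩
    have h2 := hppk N m hm
    have h3 : g m ≥ ⨅ i, g i := hgL m
    have h4 : ‖p m - p N‖^2 < ε^2 := by
      have := hN N le_rfl
      linarith
    rw [dist_eq_norm]
    exact lt_of_pow_lt_pow_left₀ 2 hε.le h4
  obtain ⟨xbar, hxbar⟩ := cauchySeq_tendsto_of_complete hpcauchy
  have hxbarSOL : xbar ∈ SOL F C :=
    hSOLcl.mem_of_tendsto hxbar (Eventually.of_forall fun k => (hp k).1)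
  -- ergodic identity
  have haux : ∀ (k : ℕ) (u v : EuclideanSpace ℝ (Fin n)),
      σ k * ⟪x (k+1) - u, v⟫ = ∑ j ∈ Finset.range (k+1), w j * ⟪ytil j - u, v⟫ := by
    have hx' : ∀ k, x (k+1) = (σ k)⁻¹ • ∑ j ∈ Finset.range (k+1), w j • ytil j := hx
    intro k u v
    have hσne : σ k ≠ 0 := (hσpos k).ne'
    rw [hx' k, inner_sub_left, real_inner_smul_left, sum_inner]
    simp_rw [real_inner_smul_left, inner_sub_left, mul_sub]
    rw [Finset.sum_sub_distrib, ← Finset.sum_mul, ← hσw k]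
    field_simp
  -- gap bound for points of C
  have hgapC : ∀ q ∈ C, ∀ k, ⟪F q, x (k+1) - q⟫ ≤ (‖ytil 0 - q‖^2 + S) / (2 * σ k) := by
    intro q hqC k
    have h1 : ∀ j, w j * ⟪F q, ytil j - q⟫
        ≤ (‖ytil j - q‖^2 - ‖ytil (j+1) - q‖^2 + β j^2)/2 := by
      intro j
      have h2 := hstep j q hqC
      have h3 : ⟪F q, ytil j - q⟫ ≤ ⟪F (ytil j), ytil j - q⟫ := by
        have h6 := hFmono (ytil j) q
        rw [inner_sub_left] at h6; linarith
      have h4 := (hwpos j).le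
      nlinarith [mul_le_mul_of_nonneg_left h3 h4]
    have h5 : ∑ j ∈ Finset.range (k+1), w j * ⟪F q, ytil j - q⟫
        ≤ (‖ytil 0 - q‖^2 + S)/2 := by
      calc ∑ j ∈ Finset.range (k+1), w j * ⟪F q, ytil j - q⟫
          ≤ ∑ j ∈ Finset.range (k+1), (‖ytil j - q‖^2 - ‖ytil (j+1) - q‖^2 + β j^2)/2 :=
            Finset.sum_le_sum fun j _ => h1 j
        _ = ((‖ytil 0 - q‖^2 - ‖ytil (k+1) - q‖^2) + Sp (k+1))/2 := by
            rw [← Finset.sum_div, Finset.sum_add_distrib, Finset.sum_range_sub' (fun j => ‖ytil j - q‖^2)]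
        _ ≤ (‖ytil 0 - q‖^2 + S)/2 := by
            have := hSpS (k+1)
            nlinarith [sq_nonneg ‖ytil (k+1) - q‖]
    have h6 : σ k * ⟪F q, x (k+1) - q⟫ ≤ (‖ytil 0 - q‖^2 + S)/2 := by
      have h7 := haux k q (F q)
      rw [(real_inner_comm _ _ : ⟪F q, x (k+1) - q⟫ = ⟪x (k+1) - q, F q⟫), h7]
      calc ∑ j ∈ Finset.range (k+1), w j * ⟪ytil j - q, F q⟫
          = ∑ j ∈ Finset.range (k+1), w j * ⟪F q, ytil j - q⟫ := by
            apply Finset.sum_congr rfl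
            intro j _
            rw [real_inner_comm]
        _ ≤ (‖ytil 0 - q‖^2 + S)/2 := h5
    rw [le_div_iff₀ (by linarith [hσpos k] : (0:ℝ) < 2 * σ k)]
    nlinarith
  -- distance of ergodic iterates to C
  have hx' : ∀ k, x (k+1) = (σ k)⁻¹ • ∑ j ∈ Finset.range (k+1), w j • ytil j := hx
  have hdistx : ∀ k, infDist (x (k+1)) C ≤ θ * S / σ k := by
    have hc : ∀ j, ∃ c, c ∈ C ∧ ‖ytil j - c‖ ≤ θ * β j := by
      intro j
      obtain ⟨c, hcC, hce⟩ := hCcl.exists_infDist_eq_dist hCne (ytil j)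
      exact ⟨c, hcC, by rw [← dist_eq_norm, ← hce]; exact hfeas j⟩
    choose c hcC hcd using hc
    intro k
    have hσne : (σ k) ≠ 0 := (hσpos k).ne'
    set u : EuclideanSpace ℝ (Fin n) :=
      (σ k)⁻¹ • ∑ j ∈ Finset.range (k+1), w j • c j with hu
    have huC : u ∈ C := by
      have e : u = ∑ j ∈ Finset.range (k+1), ((σ k)⁻¹ * w j) • c j := by
        rw [hu, Finset.smul_sum]; simp_rw [smul_smul]
      rw [e]
      apply hCcv.sum_mem
      · intro j _
        have := (hwpos j).le
        have := (hσpos k).le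
        positivity
      · rw [← Finset.mul_sum, ← hσw k, inv_mul_cancel₀ hσne]
      · intro j _; exact hcC j
    have hxu : ‖x (k+1) - u‖ ≤ θ * S / σ k := by
      have e : x (k+1) - u = (σ k)⁻¹ • ∑ j ∈ Finset.range (k+1), w j • (ytil j - c j) := by
        rw [hx' k, hu, ← smul_sub, ← Finset.sum_sub_distrib]
        congr 1
        apply Finset.sum_congr rfl
        intro j _
        rw [smul_sub]
      rw [e, norm_smul, Real.norm_eq_abs, abs_of_nonneg (inv_nonneg.mpr (hσpos k).le)]
      have h1 : ‖∑ j ∈ Finset.range (k+1), w j • (ytil j - c j)‖ ≤ θ * S := by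
        calc ‖∑ j ∈ Finset.range (k+1), w j • (ytil j - c j)‖
            ≤ ∑ j ∈ Finset.range (k+1), ‖w j • (ytil j - c j)‖ := norm_sum_le _ _
          _ = ∑ j ∈ Finset.range (k+1), w j * ‖ytil j - c j‖ := by
              apply Finset.sum_congr rfl
              intro j _
              rw [norm_smul, Real.norm_eq_abs, abs_of_nonneg (hwpos j).le]
          _ ≤ ∑ j ∈ Finset.range (k+1), θ * β j^2 := by
              apply Finset.sum_le_sum
              intro j _
              have := hcd j
              have := hwβ j
              have := (hwpos j).le
              have := (hβpos j).le
              nlinarith [norm_nonneg (ytil j - c j)]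
          _ = θ * Sp (k+1) := by rw [hSpdef, Finset.mul_sum]
          _ ≤ θ * S := by nlinarith [hSpS (k+1)]
      calc (σ k)⁻¹ * ‖∑ j ∈ Finset.range (k+1), w j • (ytil j - c j)‖
          ≤ (σ k)⁻¹ * (θ * S) :=
            mul_le_mul_of_nonneg_left h1 (inv_nonneg.mpr (hσpos k).le)
        _ = θ * S / σ k := by rw [div_eq_mul_inv]; ring
    calc infDist (x (k+1)) C ≤ dist (x (k+1)) u := infDist_le_dist_of_mem huC
      _ = ‖x (k+1) - u‖ := dist_eq_norm _ _
      _ ≤ θ * S / σ k := hxu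
  have hdist0 : Tendsto (fun k => infDist (x k) C) atTop (nhds 0) := by
    have h1 : Tendsto (fun k => θ * S / σ k) atTop (nhds 0) :=
      Tendsto.div_atTop tendsto_const_nhds hσtop
    have h2 : Tendsto (fun k => infDist (x (k+1)) C) atTop (nhds 0) :=
      squeeze_zero (fun k => infDist_nonneg) (fun k => hdistx k) h1
    exact (tendsto_add_atTop_iff_nat 1).mp h2
  have hxb : ∀ k, ‖x (k+1)‖ ≤ ‖q0‖ + Ry := by
    intro k
    rw [hx' k, norm_smul, Real.norm_eq_abs, abs_of_nonneg (inv_nonneg.mpr (hσpos k).le)]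
    have h1 : ‖∑ j ∈ Finset.range (k+1), w j • ytil j‖ ≤ σ k * (‖q0‖ + Ry) := by
      calc ‖∑ j ∈ Finset.range (k+1), w j • ytil j‖
          ≤ ∑ j ∈ Finset.range (k+1), ‖w j • ytil j‖ := norm_sum_le _ _
        _ = ∑ j ∈ Finset.range (k+1), w j * ‖ytil j‖ := by
            apply Finset.sum_congr rfl
            intro j _
            rw [norm_smul, Real.norm_eq_abs, abs_of_nonneg (hwpos j).le]
        _ ≤ ∑ j ∈ Finset.range (k+1), w j * (‖q0‖ + Ry) :=
            Finset.sum_le_sum fun j _ => mul_le_mul_of_nonneg_left (hyn j) (hwpos j).le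
        _ = σ k * (‖q0‖ + Ry) := by rw [← Finset.sum_mul, ← hσw k]
    calc (σ k)⁻¹ * ‖∑ j ∈ Finset.range (k+1), w j • ytil j‖
        ≤ (σ k)⁻¹ * (σ k * (‖q0‖ + Ry)) :=
          mul_le_mul_of_nonneg_left h1 (inv_nonneg.mpr (hσpos k).le)
      _ = ‖q0‖ + Ry := inv_mul_cancel_left₀ (hσpos k).ne' _
  -- limsup inequality for ytil against any solution
  have hAlim : ∀ a ∈ SOL F C, ∀ ε : ℝ, 0 < ε →
      ∀ᶠ k in atTop, ⟪ytil k - xbar, a - xbar⟫ ≤ ε := by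
    intro a ha ε hε
    have hproj : ∀ k, ⟪ytil k - p k, a - p k⟫ ≤ 0 := fun k =>
      proj_inner_le (SOL F C) hSOLcv (hp k).1 (hp k).2 ha
    set r : ℕ → ℝ := fun k => ⟪ytil k - xbar, a - xbar⟫ - ⟪ytil k - p k, a - p k⟫ with hrdef
    have hre : ∀ k, r k = ⟪ytil k, p k - xbar⟫ + (⟪p k, a - p k⟫ - ⟪xbar, a - xbar⟫) := by
      intro k
      simp only [hrdef, inner_sub_left, inner_sub_right]
      ring
    have hpn0 : Tendsto (fun k => ‖p k - xbar‖) atTop (nhds 0) := by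
      rw [← tendsto_iff_norm_sub_tendsto_zero]
      exact hxbar
    have ht1 : Tendsto (fun k => ⟪ytil k, p k - xbar⟫) atTop (nhds 0) := by
      refine squeeze_zero_norm (a := fun k => (‖q0‖ + Ry) * ‖p k - xbar‖) (fun k => ?_) ?_
      · calc ‖⟪ytil k, p k - xbar⟫‖ ≤ ‖ytil k‖ * ‖p k - xbar‖ := by
              rw [Real.norm_eq_abs]; exact abs_real_inner_le_norm _ _
          _ ≤ (‖q0‖ + Ry) * ‖p k - xbar‖ :=
              mul_le_mul_of_nonneg_right (hyn k) (norm_nonneg _)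
      · simpa using hpn0.const_mul (‖q0‖ + Ry)
    have ht2 : Tendsto (fun k => ⟪p k, a - p k⟫ - ⟪xbar, a - xbar⟫) atTop (nhds 0) := by
      have hcont : Continuous (fun v : EuclideanSpace ℝ (Fin n) => ⟪v, a - v⟫) :=
        continuous_id.inner (continuous_const.sub continuous_id)
      have h1 : Tendsto (fun k => ⟪p k, a - p k⟫) atTop (nhds ⟪xbar, a - xbar⟫) :=
        (hcont.tendsto xbar).comp hxbar
      simpa using h1.sub (tendsto_const_nhds (x := ⟪xbar, a - xbar⟫))
    have hr0 : Tendsto r atTop (nhds 0) := by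
      have h2 := ht1.add ht2
      rw [add_zero] at h2
      exact Tendsto.congr (fun k => (hre k).symm) h2
    filter_upwards [hr0.eventually_lt_const hε] with k hk
    have := hproj k
    have he : ⟪ytil k - xbar, a - xbar⟫ = ⟪ytil k - p k, a - p k⟫ + r k := by
      simp only [hrdef]; ring
    linarith
  -- ergodic limsup
  have hXav : ∀ a ∈ SOL F C, ∀ ε : ℝ, 0 < ε →
      ∀ᶠ k in atTop, ⟪x k - xbar, a - xbar⟫ ≤ ε := by
    intro a ha ε hε
    obtain ⟨K, hK⟩ := (hAlim a ha (ε/2) (by linarith)).exists_forall_of_atTop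
    set B3 : ℝ := (‖q0‖ + Ry + ‖xbar‖) * ‖a - xbar‖ with hB3
    set head : ℝ := ∑ j ∈ Finset.range K, w j * ⟪ytil j - xbar, a - xbar⟫ with hhead
    have hheadb : ∀ k, K ≤ k+1 → σ k * ⟪x (k+1) - xbar, a - xbar⟫ ≤ head + ε/2 * σ k := by
      intro k hk
      rw [haux k xbar (a - xbar)]
      have hsplit : ∑ j ∈ Finset.range (k+1), w j * ⟪ytil j - xbar, a - xbar⟫
          = head + ∑ j ∈ Finset.Ico K (k+1), w j * ⟪ytil j - xbar, a - xbar⟫ := by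
        rw [hhead, Finset.sum_range_add_sum_Ico _ hk]
      rw [hsplit]
      have h1 : ∑ j ∈ Finset.Ico K (k+1), w j * ⟪ytil j - xbar, a - xbar⟫
          ≤ ∑ j ∈ Finset.Ico K (k+1), w j * (ε/2) := by
        apply Finset.sum_le_sum
        intro j hj
        exact mul_le_mul_of_nonneg_left (hK j (Finset.mem_Ico.mp hj).1) (hwpos j).le
      have h2 : ∑ j ∈ Finset.Ico K (k+1), w j * (ε/2) ≤ σ k * (ε/2) := by
        rw [← Finset.sum_mul]
        apply mul_le_mul_of_nonneg_right _ (by linarith)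
        rw [hσw k]
        apply Finset.sum_le_sum_of_subset_of_nonneg
        · rw [Finset.range_eq_Ico]
          exact Finset.Ico_subset_Ico (Nat.zero_le K) le_rfl
        · intro j _ _
          exact (hwpos j).le
      linarith
    have hhead0 : Tendsto (fun k => head / σ k) atTop (nhds 0) :=
      Tendsto.div_atTop tendsto_const_nhds hσtop
    have hev : ∀ᶠ k in atTop, head / σ k < ε/2 := hhead0.eventually_lt_const (by linarith)
    rw [eventually_atTop] at hev ⊢
    obtain ⟨N1, hN1⟩ := hev
    refine ⟨max (K+1) (N1+1), fun k hk => ?_⟩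
    obtain ⟨m, rfl⟩ : ∃ m, k = m + 1 := ⟨k - 1, by omega⟩
    have hm1 : K ≤ m + 1 := by
      have := le_trans (le_max_left (K+1) (N1+1)) hk
      omega
    have hm2 : N1 ≤ m := by
      have := le_trans (le_max_right (K+1) (N1+1)) hk
      omega
    have h3 := hheadb m hm1
    have h4 := hN1 m hm2
    have h5 : ⟪x (m+1) - xbar, a - xbar⟫ ≤ head / σ m + ε/2 := by
      rw [← sub_le_iff_le_add, le_div_iff₀ (hσpos m)]
      nlinarith [hσpos m]
    linarith
  -- uniqueness of subsequential limits
  have hkey : ∀ (u' : ℕ → ℕ), Tendsto u' atTop atTop →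
      ∀ a, Tendsto (fun m => x (u' m)) atTop (nhds a) → a = xbar := by
    intro u' hu' a hconv
    have haC : a ∈ C := by
      have h1 : Tendsto (fun m => infDist (x (u' m)) C) atTop (nhds (infDist a C)) :=
        ((continuous_infDist_pt C).tendsto a).comp hconv
      have h2 : Tendsto (fun m => infDist (x (u' m)) C) atTop (nhds 0) :=
        hdist0.comp hu'
      exact (hCcl.mem_iff_infDist_zero hCne).mpr (tendsto_nhds_unique h1 h2)
    have hmina : ∀ qc ∈ C, 0 ≤ ⟪F qc, qc - a⟫ := by
      intro qc hqc
      have hle : ∀ ε : ℝ, 0 < ε → ⟪F qc, a - qc⟫ ≤ ε := by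
        intro ε hε
        have h1 : Tendsto (fun k => (‖ytil 0 - qc‖^2 + S) / (2 * σ k)) atTop (nhds 0) := by
          have h2 : Tendsto (fun k => (2:ℝ) * σ k) atTop atTop :=
            hσtop.const_mul_atTop two_pos
          exact Tendsto.div_atTop tendsto_const_nhds h2
        have h3 := h1.eventually_lt_const hε
        have h4 : ∀ᶠ k in atTop, ⟪F qc, x k - qc⟫ ≤ ε := by
          rw [eventually_atTop] at h3 ⊢
          obtain ⟨N, hN⟩ := h3
          refine ⟨N+1, fun k hk => ?_⟩
          obtain ⟨m, rfl⟩ : ∃ m, k = m+1 := ⟨k-1, by omega⟩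
          exact le_trans (hgapC qc hqc m) (hN m (by omega)).le
        have h5 : Tendsto (fun m => ⟪F qc, x (u' m) - qc⟫) atTop (nhds ⟪F qc, a - qc⟫) := by
          have hc : Continuous (fun v : EuclideanSpace ℝ (Fin n) => ⟪F qc, v - qc⟫) :=
            continuous_const.inner (continuous_id.sub continuous_const)
          exact (hc.tendsto a).comp hconv
        exact le_of_tendsto h5 (hu'.eventually h4)
      have h6 : ⟪F qc, a - qc⟫ ≤ 0 := by
        by_contra h
        push_neg at h
        linarith [hle (⟪F qc, a - qc⟫/2) (by linarith)]
      have h7 : ⟪F qc, qc - a⟫ = -⟪F qc, a - qc⟫ := by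
        rw [← inner_neg_right]
        congr 1
        abel
      linarith
    have haSOL : a ∈ SOL F C := minty_mem_SOL C hCcv F hFcont haC hmina
    have h7 : ∀ ε : ℝ, 0 < ε → ⟪a - xbar, a - xbar⟫ ≤ ε := by
      intro ε hε
      have h8 := hXav a haSOL ε hε
      have h9 : Tendsto (fun m => ⟪x (u' m) - xbar, a - xbar⟫) atTop
          (nhds ⟪a - xbar, a - xbar⟫) := by
        have hc : Continuous (fun v : EuclideanSpace ℝ (Fin n) => ⟪v - xbar, a - xbar⟫) :=
          (continuous_id.sub continuous_const).inner continuous_const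
        exact (hc.tendsto a).comp hconv
      exact le_of_tendsto h9 (hu'.eventually h8)
    have h10 : ⟪a - xbar, a - xbar⟫ ≤ 0 := by
      by_contra h
      push_neg at h
      linarith [h7 (⟪a - xbar, a - xbar⟫/2) (by linarith)]
    have h11 : ⟪a - xbar, a - xbar⟫ = (0:ℝ) := le_antisymm h10 real_inner_self_nonneg
    have h12 : a - xbar = 0 := by
      exact inner_self_eq_zero.mp h11
    exact sub_eq_zero.mp h12
  refine ⟨xbar, hxbarSOL, hxbar, ?_⟩
  apply tendsto_of_subseq_tendsto
  intro ns hns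
  have hmem : ∀ m, x (ns m) ∈ closedBall (0 : EuclideanSpace ℝ (Fin n))
      (max ‖x 0‖ (‖q0‖ + Ry)) := by
    intro m
    rw [mem_closedBall_zero_iff]
    cases' h : ns m with k
    · exact le_max_left _ _
    · exact le_trans (hxb k) (le_max_right _ _)
  obtain ⟨a, -, φ, hφ, hconv⟩ := tendsto_subseq_of_bounded isBounded_closedBall hmem
  refine ⟨φ, ?_⟩
  have ha : a = xbar := hkey (ns ∘ φ) (hns.comp hφ.tendsto_atTop) a hconv
  rw [← ha]
  exact hconv
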